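/- arXiv:2603.21198 — 2 statements merged into one kernel-verified Lean document; each statement's English description precedes it below -/
import Mathlib

section
/- Let w = (w₀,…,w_n) be positive integers, μ ≥ 2, and let η, η′ ∈ (ℤ/μℤ)^{n+1}. If η′ = κη + m·w̄ for some unit κ ∈ (ℤ/μℤ)* and some m ∈ ℤ (where w̄ denotes w reduced mod μ), then η and η′ generate the same subgroup relations: the matrix with rows w, η is almost free if and only if the matrix with rows w, η′ is almost free. -/
/-- A 2×(n+1) matrix with first row w and second row η is almost free if any n of its
n+1 columns generate ℤ × ℤ/μℤ. -/
def AlmostFree {n : ℕ} (μ : ℕ) (w : Fin (n + 1) → ℤ) (η : Fin (n + 1) → ZMod μ) : Prop :=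
  ∀ i : Fin (n + 1),
    AddSubgroup.closure ((fun j => ((w j, η j) : ℤ × ZMod μ)) '' {j | j ≠ i}) = ⊤

/-- The shear-and-scale automorphism of ℤ × ℤ/μ. -/
def shearEquiv (μ : ℕ) (κ : (ZMod μ)ˣ) (m : ℤ) : (ℤ × ZMod μ) ≃+ (ℤ × ZMod μ) where
  toFun p := (p.1, (κ : ZMod μ) * p.2 + m * (p.1 : ZMod μ))
  invFun p := (p.1, (κ⁻¹ : (ZMod μ)ˣ) * (p.2 - m * (p.1 : ZMod μ)))
  left_inv p := by
    ext
    · rfl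
    · simp [mul_add, ← mul_assoc, ZMod.natCast_self]
  right_inv p := by
    ext
    · rfl
    · simp [mul_sub, ← mul_assoc, mul_add]
  map_add' p q := by
    ext
    · rfl
    · simp only [Prod.snd_add, Prod.fst_add]
      push_cast
      ring

lemma closure_image_addEquiv {G H : Type*} [AddGroup G] [AddGroup H] (e : G ≃+ H)
    (s : Set G) : AddSubgroup.closure (e '' s) = (AddSubgroup.closure s).map e.toAddMonoidHom := by
  rw [AddMonoidHom.map_closure e.toAddMonoidHom s]
  rfl

lemma closure_image_addEquiv_top {G H : Type*} [AddGroup G] [AddGroup H] (e : G ≃+ H)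
    (s : Set G) : AddSubgroup.closure (e '' s) = ⊤ ↔ AddSubgroup.closure s = ⊤ := by
  rw [closure_image_addEquiv]
  constructor
  · intro h
    have := congrArg (AddSubgroup.comap e.toAddMonoidHom) h
    rwa [AddSubgroup.comap_map_eq_self_of_injective e.injective,
      AddSubgroup.comap_top] at this
  · intro h
    rw [h]
    exact AddSubgroup.map_top_of_surjective _ e.surjective

/-- If η′ = κη + m·w̄ for a unit κ and m ∈ ℤ, then the matrix with rows w, η is almost
free iff the matrix with rows w, η′ is almost free. -/
theorem stmt4 (n μ : ℕ) (hμ : 2 ≤ μ) (w : Fin (n + 1) → ℤ) (hw : ∀ i, 0 < w i)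
    (η η' : Fin (n + 1) → ZMod μ) (κ : (ZMod μ)ˣ) (m : ℤ)
    (hη' : ∀ i, η' i = (κ : ZMod μ) * η i + m * ((w i : ℤ) : ZMod μ)) :
    AlmostFree μ w η ↔ AlmostFree μ w η' := by
  unfold AlmostFree
  have key : ∀ i, (fun j => ((w j, η' j) : ℤ × ZMod μ)) '' {j | j ≠ i}
      = shearEquiv μ κ m '' ((fun j => ((w j, η j) : ℤ × ZMod μ)) '' {j | j ≠ i}) := by
    intro i
    rw [← Set.image_comp]
    apply Set.image_congr
    intro j _
    simp [shearEquiv, hη' j]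
  constructor
  · intro h i
    rw [key i, closure_image_addEquiv_top]
    exact h i
  · intro h i
    have := h i
    rw [key i, closure_image_addEquiv_top] at this
    exact this
end

section
/- Let w = (w₀,…,w_n) be a vector of positive integers, μ ≥ 2, and set g_{−1} = μ, g_i = gcd(μ, w₀,…,w_i), d_i = μ·g_i/g_{i−1} for 0 ≤ i ≤ n. Then for every η ∈ (ℤ/μℤ)^{n+1} and every unit κ ∈ (ℤ/μℤ)*, there exists a unique vector η′ in the coset {κη + m·w̄ : m ∈ ℤ} ⊆ (ℤ/μℤ)^{n+1} whose coordinates η′_i (taken as representatives in [0, μ)) satisfy 0 ≤ η′_i < d_i for all i = 0,…,n. -/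
lemma stmt5_key (N K G : ℕ) (hN : 0 < N) (A W : ℤ)
    (hG : (G : ℤ) = Int.gcd (N : ℤ) W) (hK : N = K * G) :
    ∃ t₀ : ℤ, ∀ t : ℤ, ((A + t * W) % (N : ℤ) < G) ↔ (K : ℤ) ∣ (t - t₀) := by
  have hNz : (N : ℤ) ≠ 0 := by exact_mod_cast hN.ne'
  have hGpos : (0 : ℤ) < G := by
    rw [hG]
    exact_mod_cast Int.gcd_pos_of_ne_zero_left W hNz
  have hGN : (G : ℤ) ∣ N := hG ▸ Int.gcd_dvd_left _ _
  have hGW : (G : ℤ) ∣ W := hG ▸ Int.gcd_dvd_right _ _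
  have hGleN : (G : ℤ) ≤ N := Int.le_of_dvd (by exact_mod_cast hN) hGN
  have hNKG : (N : ℤ) = K * G := by exact_mod_cast hK
  have hbez : (G : ℤ) = N * Int.gcdA N W + W * Int.gcdB N W := by
    rw [hG]; exact Int.gcd_eq_gcd_ab N W
  set t₀ : ℤ := -(A / G) * Int.gcdB N W with ht₀def
  have hAmod : A % G = A - G * (A / G) := Int.emod_def A G
  have h1 : A + t₀ * W = A % G + ((A / G) * Int.gcdA N W) * N := by
    rw [hAmod]; linear_combination (A / (G:ℤ)) * hbez
  have hmod0 : (A + t₀ * W) % N = A % G := by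
    rw [h1, Int.add_mul_emod_self_right]
    exact Int.emod_eq_of_lt (Int.emod_nonneg A hGpos.ne')
      (lt_of_lt_of_le (Int.emod_lt_of_pos A hGpos) hGleN)
  have hcong : ∀ t : ℤ, (G : ℤ) ∣ ((A + t * W) % N - A % G) := by
    intro t
    have h2 : (A + t * W) % N = A + t * W - N * ((A + t * W) / N) := Int.emod_def _ _
    rw [h2, hAmod]
    have h3 : A + t * W - N * ((A + t * W) / N) - (A - G * (A / G)) =
        t * W - N * ((A + t * W) / N) + G * (A / G) := by ring
    rw [h3]
    exact dvd_add (dvd_sub (Dvd.dvd.mul_left hGW t) (Dvd.dvd.mul_right hGN _))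
      (Dvd.dvd.mul_right dvd_rfl _)
  obtain ⟨W', hW'eq⟩ := hGW
  refine ⟨t₀, fun t => ⟨fun h => ?_, fun h => ?_⟩⟩
  · have hr : (A + t * W) % N = A % G := by
      have hdv := hcong t
      have hb1 : 0 ≤ (A + t * W) % N := Int.emod_nonneg _ hNz
      have hb2 : A % G < G := Int.emod_lt_of_pos A hGpos
      have hb3 : 0 ≤ A % G := Int.emod_nonneg A hGpos.ne'
      have := Int.eq_zero_of_abs_lt_dvd hdv (by rw [abs_lt]; omega)
      omega
    have h5 : (A + t * W) % N = (A + t₀ * W) % N := by rw [hr, hmod0]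
    have h6 : (N : ℤ) ∣ (A + t₀ * W) - (A + t * W) := Int.ModEq.dvd h5
    have hNdvd : (N : ℤ) ∣ (t - t₀) * W := by
      rw [show (t - t₀) * W = -((A + t₀ * W) - (A + t * W)) by ring]
      exact dvd_neg.mpr h6
    obtain ⟨s, hs⟩ := hNdvd
    have hcop : IsCoprime (K : ℤ) W' := by
      have hgcd1 : Int.gcd ((N : ℤ) / G) (W / G) = 1 := by
        rw [hG]
        exact Int.gcd_div_gcd_div_gcd (Int.gcd_pos_of_ne_zero_left W hNz)
      have hN'' : (N : ℤ) / G = K := by rw [hNKG]; exact Int.mul_ediv_cancel _ hGpos.ne'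
      have hW'' : W / G = W' := by rw [hW'eq]; exact Int.mul_ediv_cancel_left _ hGpos.ne'
      rw [hN'', hW''] at hgcd1
      exact Int.isCoprime_iff_gcd_eq_one.2 hgcd1
    have hKd : (K : ℤ) ∣ (t - t₀) * W' := by
      refine ⟨s, mul_left_cancel₀ hGpos.ne' ?_⟩
      calc (G : ℤ) * ((t - t₀) * W') = (t - t₀) * (G * W') := by ring
        _ = (t - t₀) * W := by rw [← hW'eq]
        _ = N * s := hs
        _ = G * (K * s) := by rw [hNKG]; ring
    exact hcop.dvd_of_dvd_mul_right hKd
  · obtain ⟨s, hs⟩ := h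
    have h8 : A + t * W = (A + t₀ * W) + (s * W') * N := by
      linear_combination W * hs + (K : ℤ) * s * hW'eq - s * W' * hNKG
    rw [h8, Int.add_mul_emod_self_right, hmod0]
    exact Int.emod_lt_of_pos A hGpos

/-- Normalized representatives: with g 0 = μ (this is g_{−1}) and
g (i+1) = gcd(g i, w i) (so g (i+1) = gcd(μ, w₀, …, w_i)) and d i = μ * g (i+1) / g i,
every coset {κη + m·w̄ : m ∈ ℤ} contains a unique η′ with coordinates
(as representatives in [0,μ)) satisfying η′_i < d i for all i. -/
theorem stmt5 (n μ : ℕ) (hμ : 2 ≤ μ) (w : Fin (n + 1) → ℕ) (hw : ∀ i, 0 < w i)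
    (g : ℕ → ℕ) (hg0 : g 0 = μ)
    (hg : ∀ i : Fin (n + 1), g (i + 1) = Nat.gcd (g i) (w i))
    (d : Fin (n + 1) → ℕ) (hd : ∀ i : Fin (n + 1), d i = μ * g (i + 1) / g i)
    (η : Fin (n + 1) → ZMod μ) (κ : (ZMod μ)ˣ) :
    ∃! η' : Fin (n + 1) → ZMod μ,
      (∃ m : ℤ, ∀ i, η' i = (κ : ZMod μ) * η i + m * ((w i : ℕ) : ZMod μ)) ∧
      ∀ i, (η' i).val < d i := by
  haveI : NeZero μ := ⟨by omega⟩
  have hμ0 : 0 < μ := by omega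
  have hchain : ∀ j : ℕ, j ≤ n → g (j + 1) ∣ g j := by
    intro j hj
    have h := hg ⟨j, by omega⟩
    exact h ▸ Nat.gcd_dvd_left _ _
  have hmono : ∀ b : ℕ, b ≤ n + 1 → ∀ a : ℕ, a ≤ b → g b ∣ g a := by
    intro b
    induction b with
    | zero => intro _ a ha; simp [Nat.le_zero.mp ha]
    | succ b ihb =>
      intro hb a ha
      rcases Nat.lt_succ_iff_lt_or_eq.mp (Nat.lt_succ_of_le ha) with h | h
      · exact (hchain b (by omega)).trans (ihb (by omega) a (by omega))
      · rw [h]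
  have hgpos : ∀ k : ℕ, k ≤ n + 1 → 0 < g k := by
    intro k
    induction k with
    | zero => intro _; rw [hg0]; omega
    | succ k ihk =>
      intro hk
      have h := hg ⟨k, by omega⟩
      rw [h]
      exact Nat.gcd_pos_of_pos_right _ (hw ⟨k, by omega⟩)
  set A : Fin (n + 1) → ℤ := fun i => (((κ : ZMod μ) * η i).val : ℤ) with hA
  have main : ∀ k : ℕ, k ≤ n + 1 → ∃ m₀ : ℤ, ∀ m : ℤ,
      ((∀ i : Fin (n + 1), (i : ℕ) < k →
          (A i + m * (w i : ℤ)) % (μ : ℤ) < (d i : ℤ)) ↔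
        ((μ / g k : ℕ) : ℤ) ∣ (m - m₀)) := by
    intro k
    induction k with
    | zero =>
      intro _
      refine ⟨0, fun m => ⟨fun _ => ?_, fun _ i hi => absurd hi (by omega)⟩⟩
      rw [hg0, Nat.div_self hμ0]
      simp
    | succ k ih =>
      intro hk
      obtain ⟨m₀, hm₀⟩ := ih (by omega)
      have hk' : k < n + 1 := by omega
      let kf : Fin (n + 1) := ⟨k, hk'⟩
      have hwk : 0 < w kf := hw kf
      have hgk : g (k + 1) = Nat.gcd (g k) (w kf) := hg kf
      have hgkpos : 0 < g k := hgpos k (by omega)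
      have hgk1pos : 0 < g (k + 1) := hgpos (k + 1) hk
      obtain ⟨c, hc⟩ : g k ∣ μ := by rw [← hg0]; exact hmono k (by omega) 0 (by omega)
      obtain ⟨e, he⟩ : g (k + 1) ∣ g k := hchain k (by omega)
      have hMc : μ / g k = c := by rw [hc, Nat.mul_div_cancel_left _ hgkpos]
      have hdk : d kf = c * g (k + 1) := by
        have h1 : d kf = μ * g (k + 1) / g k := hd kf
        rw [h1, hc, show g k * c * g (k + 1) = g k * (c * g (k + 1)) by ring,
          Nat.mul_div_cancel_left _ hgkpos]
      have hgcd : ((d kf : ℕ) : ℤ) = Int.gcd (μ : ℤ) ((c : ℤ) * (w kf : ℤ)) := by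
        have h1 : (c : ℤ) * (w kf : ℤ) = ((c * w kf : ℕ) : ℤ) := by push_cast; ring
        rw [h1]
        have h2 : Int.gcd ((μ : ℕ) : ℤ) (((c * w kf : ℕ) : ℕ) : ℤ) = Nat.gcd μ (c * w kf) :=
          Int.gcd_natCast_natCast _ _
        rw [h2]
        have h3 : Nat.gcd μ (c * w kf) = c * g (k + 1) := by
          rw [hc, mul_comm (g k) c, Nat.gcd_mul_left, ← hgk]
        rw [h3, hdk]
      have hKG : μ = e * d kf := by rw [hdk, hc, he]; ring
      have hfin : μ / g (k + 1) = c * e := by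
        rw [hc, he, show g (k + 1) * e * c = g (k + 1) * (c * e) by ring,
          Nat.mul_div_cancel_left _ hgk1pos]
      obtain ⟨t₀, ht₀⟩ := stmt5_key μ e (d kf) hμ0 (A kf + m₀ * (w kf : ℤ))
        ((c : ℤ) * (w kf : ℤ)) hgcd hKG
      refine ⟨m₀ + t₀ * c, fun m => ⟨?_, ?_⟩⟩
      · intro hbd
        obtain ⟨t, ht⟩ : ((μ / g k : ℕ) : ℤ) ∣ (m - m₀) :=
          (hm₀ m).mp (fun i hi => hbd i (by omega))
        rw [hMc] at ht
        have hbk := hbd kf (Nat.lt_succ_self k)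
        have hrw : A kf + m * (w kf : ℤ) =
            (A kf + m₀ * (w kf : ℤ)) + t * ((c : ℤ) * (w kf : ℤ)) := by
          linear_combination (w kf : ℤ) * ht
        rw [hrw] at hbk
        obtain ⟨s, hs⟩ := (ht₀ t).mp hbk
        rw [hfin]
        refine ⟨s, ?_⟩
        push_cast
        linear_combination ht + (c : ℤ) * hs
      · intro hdvd
        rw [hfin] at hdvd
        obtain ⟨s, hs⟩ := hdvd
        push_cast at hs
        have ht : m - m₀ = (c : ℤ) * (t₀ + e * s) := by linear_combination hs
        have hlow : ∀ i : Fin (n + 1), (i : ℕ) < k →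
            (A i + m * (w i : ℤ)) % (μ : ℤ) < (d i : ℤ) :=
          (hm₀ m).mpr ⟨t₀ + e * s, by rw [hMc]; exact ht⟩
        intro i hi
        rcases Nat.lt_succ_iff_lt_or_eq.mp hi with h | h
        · exact hlow i h
        · have hieq : i = kf := Fin.ext h
          rw [hieq]
          have hrw : A kf + m * (w kf : ℤ) =
              (A kf + m₀ * (w kf : ℤ)) + (t₀ + e * s) * ((c : ℤ) * (w kf : ℤ)) := by
            linear_combination (w kf : ℤ) * ht
          rw [hrw]
          exact (ht₀ (t₀ + e * s)).mpr ⟨s, by push_cast; ring⟩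
  have bridge : ∀ (m : ℤ) (i : Fin (n + 1)),
      ((((κ : ZMod μ) * η i + (m : ZMod μ) * ((w i : ℕ) : ZMod μ)).val : ℤ)) =
        (A i + m * (w i : ℤ)) % (μ : ℤ) := by
    intro m i
    have hcast : (((A i + m * (w i : ℤ)) : ℤ) : ZMod μ) =
        (κ : ZMod μ) * η i + (m : ZMod μ) * ((w i : ℕ) : ZMod μ) := by
      push_cast [hA]
      simp [ZMod.intCast_cast, ZMod.natCast_val, ZMod.cast_id]
    rw [← hcast, ZMod.val_intCast]
  obtain ⟨m₀, hm₀⟩ := main (n + 1) le_rfl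
  refine ⟨fun i => (κ : ZMod μ) * η i + (m₀ : ZMod μ) * ((w i : ℕ) : ZMod μ),
    ⟨⟨m₀, fun i => rfl⟩, ?_⟩, ?_⟩
  · intro i
    have hb := (hm₀ m₀).mpr (by simp) i i.isLt
    have h3 := bridge m₀ i
    show ((κ : ZMod μ) * η i + (m₀ : ZMod μ) * ((w i : ℕ) : ZMod μ)).val < d i
    omega
  · rintro η'' ⟨⟨m, hm⟩, hbound⟩
    have hdvd : ((μ / g (n + 1) : ℕ) : ℤ) ∣ (m - m₀) := by
      refine (hm₀ m).mp ?_
      intro i _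
      have h2 := hbound i
      rw [hm i] at h2
      have h3 := bridge m i
      omega
    funext i
    rw [hm i]
    have hgw : g (n + 1) ∣ w i := by
      have h1 : g (n + 1) ∣ g ((i : ℕ) + 1) := hmono (n + 1) le_rfl ((i : ℕ) + 1) (by omega)
      have h2 : g ((i : ℕ) + 1) ∣ w i := by rw [hg i]; exact Nat.gcd_dvd_right _ _
      exact h1.trans h2
    obtain ⟨q, hq⟩ : g (n + 1) ∣ μ := by rw [← hg0]; exact hmono (n + 1) le_rfl 0 (by omega)
    have hq' : μ / g (n + 1) = q := by rw [hq, Nat.mul_div_cancel_left _ (hgpos (n + 1) le_rfl)]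
    rw [hq'] at hdvd
    obtain ⟨s, hs⟩ := hdvd
    obtain ⟨r, hr⟩ := hgw
    have hμdvd : (μ : ℤ) ∣ (m - m₀) * (w i : ℤ) := by
      refine ⟨s * r, ?_⟩
      push_cast [hq, hr] at hs ⊢
      linear_combination ((g (n + 1) : ℤ) * r) * hs
    have hz : (((m - m₀) * (w i : ℤ) : ℤ) : ZMod μ) = 0 :=
      (ZMod.intCast_zmod_eq_zero_iff_dvd _ _).mpr hμdvd
    push_cast at hz
    linear_combination hz
end
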